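/- If R is a commutative ring with identity of finite Krull dimension, then the Krull dimension of the Anderson ring R[X]_A equals the Krull dimension of the polynomial ring R[X]. -/

import Mathlib

open Polynomial

/-- The multiplicative set `A = {f ∈ R[X] : f(0) = 1}` of polynomials
with constant term `1`. -/
def andersonSubmonoid (R : Type*) [CommRing R] : Submonoid (Polynomial R) where
  carrier := {f | f.coeff 0 = 1}
  one_mem' := by simp
  mul_mem' := by
    intro a b ha hb
    simp only [Set.mem_setOf_eq, Polynomial.mul_coeff_zero] at *
    rw [ha, hb, mul_one]

/-- The Anderson ring `R[X]_A`, the localization of `R[X]` at `A`. -/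
abbrev AndersonRing (R : Type*) [CommRing R] := Localization (andersonSubmonoid R)

/-- The canonical ring homomorphism `R → R[X]_A`. -/
noncomputable def andersonMap (R : Type*) [CommRing R] : R →+* AndersonRing R :=
  (algebraMap (Polynomial R) (AndersonRing R)).comp Polynomial.C

section Domain

variable (D : Type*) [CommRing D] [IsDomain D]

noncomputable local instance : Algebra (Polynomial D) (Polynomial (FractionRing D)) :=
  (mapRingHom (algebraMap D (FractionRing D))).toAlgebra

lemma polyFrac_isLocalization :
    IsLocalization ((nonZeroDivisors D).map (C : D →+* Polynomial D))
      (Polynomial (FractionRing D)) := by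
  set K := FractionRing D
  constructor
  constructor
  · rintro ⟨y, d, hd, rfl⟩
    have hd0 : (d : D) ≠ 0 := nonZeroDivisors.ne_zero hd
    have : algebraMap (Polynomial D) (Polynomial K) (C d) = C (algebraMap D K d) := by
      simp [RingHom.algebraMap_toAlgebra]; rfl
    rw [this]
    exact IsUnit.map (C : K →+* Polynomial K)
      (isUnit_iff_ne_zero.mpr (by
        simpa using (IsFractionRing.to_map_eq_zero_iff (K := K)).not.mpr hd0))
  · intro z
    obtain ⟨b, hb⟩ := IsLocalization.integerNormalization_map_to_map (nonZeroDivisors D) z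
    refine ⟨⟨IsLocalization.integerNormalization (nonZeroDivisors D) z,
      ⟨C (b : D), ⟨b, b.2, rfl⟩⟩⟩, ?_⟩
    have : algebraMap (Polynomial D) (Polynomial K) (C (b : D)) = C (algebraMap D K (b : D)) := by
      simp [RingHom.algebraMap_toAlgebra]; rfl
    rw [this]
    show z * _ = Polynomial.map (algebraMap D K) _
    rw [hb]
    rw [← algebraMap_smul K (b : D) z, smul_eq_C_mul, mul_comm]
  · intro x y h
    have : Function.Injective (algebraMap (Polynomial D) (Polynomial K)) :=
      Polynomial.map_injective _ (IsFractionRing.injective D K)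
    exact ⟨1, by rw [this h]⟩

lemma domain_key {P Q : Ideal (Polynomial D)} (hP : P.IsPrime) (hQ : Q.IsPrime)
    (hlt : P < Q) (hP0 : P.comap (C : D →+* Polynomial D) = ⊥)
    (hQ0 : Q.comap (C : D →+* Polynomial D) = ⊥) : P = ⊥ := by
  set K := FractionRing D
  set M := (nonZeroDivisors D).map (C : D →+* Polynomial D) with hM
  have hloc := polyFrac_isLocalization D
  have hdisj : ∀ (I : Ideal (Polynomial D)), I.comap (C : D →+* Polynomial D) = ⊥ →
      Disjoint (M : Set (Polynomial D)) (I : Set (Polynomial D)) := by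
    intro I hI0
    rw [Set.disjoint_left]
    rintro a ⟨d, hd, rfl⟩ ha
    have : d ∈ I.comap (C : D →+* Polynomial D) := ha
    rw [hI0] at this
    exact nonZeroDivisors.ne_zero hd this
  have hdP := hdisj P hP0
  have hdQ := hdisj Q hQ0
  set f := algebraMap (Polynomial D) (Polynomial K)
  have hcomapP : Ideal.comap f (P.map f) = P := IsLocalization.comap_map_of_isPrime_disjoint M (Polynomial K) hP hdP
  have hcomapQ : Ideal.comap f (Q.map f) = Q := IsLocalization.comap_map_of_isPrime_disjoint M (Polynomial K) hQ hdQ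
  by_cases hbot : P.map f = ⊥
  · have hinj : Function.Injective f :=
      Polynomial.map_injective _ (IsFractionRing.injective D K)
    have hker : RingHom.ker f = ⊥ := (RingHom.injective_iff_ker_eq_bot f).mp hinj
    rw [← hcomapP, hbot, ← RingHom.ker_eq_comap_bot, hker]
  · haveI hPprime : (P.map f).IsPrime :=
      IsLocalization.isPrime_of_isPrime_disjoint M (Polynomial K) P hP hdP
    have hPmax : (P.map f).IsMaximal := IsPrime.to_maximal_ideal hbot
    have hQprime : (Q.map f).IsPrime :=
      IsLocalization.isPrime_of_isPrime_disjoint M (Polynomial K) Q hQ hdQ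
    have hle : P.map f ≤ Q.map f := Ideal.map_mono hlt.le
    have : P.map f = Q.map f := hPmax.eq_of_le hQprime.ne_top hle
    have : P = Q := by rw [← hcomapP, ← hcomapQ, this]
    exact absurd this hlt.ne

end Domain

section Key

variable {R : Type*} [CommRing R]

lemma key_lemma {P Q : Ideal (Polynomial R)} (hP : P.IsPrime) (hQ : Q.IsPrime)
    (hlt : P < Q) (hc : P.comap (C : R →+* Polynomial R) = Q.comap (C : R →+* Polynomial R)) :
    P = Ideal.map (C : R →+* Polynomial R) (P.comap (C : R →+* Polynomial R)) := by
  set p := P.comap (C : R →+* Polynomial R) with hp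
  haveI hpprime : p.IsPrime := Ideal.IsPrime.comap _
  set φ := Polynomial.mapRingHom (Ideal.Quotient.mk p) with hφ
  have hsurj : Function.Surjective φ := Polynomial.map_surjective _ Ideal.Quotient.mk_surjective
  have hker : RingHom.ker φ = Ideal.map (C : R →+* Polynomial R) p := by
    rw [hφ, Polynomial.ker_mapRingHom, Ideal.mk_ker]
  have hkerP : RingHom.ker φ ≤ P := by rw [hker]; exact Ideal.map_comap_le
  have hkerQ : RingHom.ker φ ≤ Q := by
    rw [hker, hc]; exact Ideal.map_comap_le
  have hcomapP : Ideal.comap φ (Ideal.map φ P) = P := by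
    rw [Ideal.comap_map_of_surjective φ hsurj, ← RingHom.ker_eq_comap_bot, sup_eq_left.mpr hkerP]
  have hcomapQ : Ideal.comap φ (Ideal.map φ Q) = Q := by
    rw [Ideal.comap_map_of_surjective φ hsurj, ← RingHom.ker_eq_comap_bot, sup_eq_left.mpr hkerQ]
  haveI hP' : (Ideal.map φ P).IsPrime := Ideal.map_isPrime_of_surjective hsurj hkerP
  haveI hQ' : (Ideal.map φ Q).IsPrime := Ideal.map_isPrime_of_surjective hsurj hkerQ
  have hlt' : Ideal.map φ P < Ideal.map φ Q := by
    refine lt_of_le_of_ne (Ideal.map_mono hlt.le) (fun heq => hlt.ne ?_)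
    rw [← hcomapP, ← hcomapQ, heq]
  -- contractions to R/p are ⊥
  have hC : ∀ r : R, φ (C r) = C (Ideal.Quotient.mk p r) := fun r => by
    simp [hφ]
  have hcont : ∀ (I : Ideal (Polynomial R)), Ideal.comap φ (Ideal.map φ I) = I →
      I.comap (C : R →+* Polynomial R) = p →
      (Ideal.map φ I).comap (C : (R ⧸ p) →+* Polynomial (R ⧸ p)) = ⊥ := by
    intro I hcom hIc
    apply le_antisymm _ bot_le
    intro x hx
    obtain ⟨r, rfl⟩ := Ideal.Quotient.mk_surjective x
    have : C (Ideal.Quotient.mk p r) ∈ Ideal.map φ I := hx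
    rw [← hC] at this
    have : C r ∈ Ideal.comap φ (Ideal.map φ I) := this
    rw [hcom] at this
    have hr : r ∈ p := by rw [← hIc]; exact this
    simpa using Ideal.Quotient.eq_zero_iff_mem.mpr hr
  have h1 := hcont P hcomapP rfl
  have h2 := hcont Q hcomapQ hc.symm
  have := domain_key (R ⧸ p) hP' hQ' hlt' h1 h2
  rw [← hcomapP, this, ← RingHom.ker_eq_comap_bot, hker]

end Key

section Chains

variable {R : Type*} [CommRing R]

lemma comap_map_C (p : Ideal R) (hp : p ≠ ⊤) :
    (Ideal.map (C : R →+* Polynomial R) p).comap (C : R →+* Polynomial R) = p := by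
  ext r
  simp only [Ideal.mem_comap, Ideal.mem_map_C_iff]
  constructor
  · intro h
    simpa using h 0
  · intro hr n
    rcases Nat.eq_zero_or_pos n with rfl | hn
    · simpa using hr
    · simp [coeff_C, Nat.pos_iff_ne_zero.mp hn]

/-- The prime `pR[X]` as a point of the prime spectrum. -/
noncomputable def pX (p : Ideal R) (hp : p.IsPrime) : PrimeSpectrum (Polynomial R) :=
  ⟨Ideal.map (C : R →+* Polynomial R) p, by haveI := hp; exact Ideal.isPrime_map_C_of_isPrime⟩

/-- Special chain lemma: a chain of length `k+1` in `Spec R[X]` yields a chain of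
length `k` ending at `pR[X]` where `p` is the contraction of the top prime. -/
lemma special_chain : ∀ (k : ℕ) (s : LTSeries (PrimeSpectrum (Polynomial R))),
    s.length = k + 1 →
    ∃ t : LTSeries (PrimeSpectrum (Polynomial R)), t.length = k ∧
      t.last = pX (s.last.asIdeal.comap (C : R →+* Polynomial R)) (Ideal.IsPrime.comap _) := by
  intro k
  induction k with
  | zero =>
    intro s _
    exact ⟨RelSeries.singleton _ _, rfl, rfl⟩
  | succ k ih =>
    intro s hs
    have hlen : s.length ≠ 0 := by omega
    have hstep : s.eraseLast.last < s.last := s.eraseLast_last_rel_last hlen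
    set q := s.eraseLast.last.asIdeal.comap (C : R →+* Polynomial R) with hq
    set p := s.last.asIdeal.comap (C : R →+* Polynomial R) with hp
    haveI hqp : q.IsPrime := Ideal.IsPrime.comap _
    haveI hpp : p.IsPrime := Ideal.IsPrime.comap _
    have hle : q ≤ p := Ideal.comap_mono hstep.le
    rcases eq_or_lt_of_le hle with heq | hlt
    · -- same contraction: the previous prime is pR[X]
      have hkey := key_lemma s.eraseLast.last.isPrime s.last.isPrime hstep
        (by rw [← hq, ← hp, heq])
      refine ⟨s.eraseLast, by simp [hs], ?_⟩
      apply PrimeSpectrum.ext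
      rw [hkey, ← hq, heq, hp]
      rfl
    · obtain ⟨t, htl, hlast⟩ := ih s.eraseLast (by simp [hs])
      have hltX : Ideal.map (C : R →+* Polynomial R) q < Ideal.map (C : R →+* Polynomial R) p := by
        refine lt_of_le_of_ne (Ideal.map_mono hlt.le) (fun hcontr => hlt.ne ?_)
        rw [← comap_map_C q hqp.ne_top, ← comap_map_C p hpp.ne_top, hcontr]
      refine ⟨t.snoc (pX p hpp) ?_, by rw [RelSeries.snoc_length, htl], RelSeries.last_snoc _ _ _⟩
      rw [hlast]
      exact hltX

/-- The prime `{f : f(0) ∈ p} = pR[X] + (X)`, as a point of the spectrum. -/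
noncomputable def Mp (p : Ideal R) (hp : p.IsPrime) : PrimeSpectrum (Polynomial R) :=
  ⟨Ideal.comap (constantCoeff : Polynomial R →+* R) p, Ideal.IsPrime.comap _⟩

lemma pX_lt_Mp (p : Ideal R) (hp : p.IsPrime) : pX p hp < Mp p hp := by
  constructor
  · intro f hf
    have := Ideal.mem_map_C_iff.mp hf 0
    simpa [Mp, Ideal.mem_comap] using this
  · intro hcontr
    have hX : (X : Polynomial R) ∈ Ideal.comap (constantCoeff : Polynomial R →+* R) p := by
      simp [Ideal.mem_comap]
    have := Ideal.mem_map_C_iff.mp (hcontr hX) 1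
    simp at this
    exact hp.ne_top (Ideal.eq_top_of_isUnit_mem _ this isUnit_one)

lemma disjoint_Mp (p : Ideal R) (hp : p.IsPrime) {x : PrimeSpectrum (Polynomial R)}
    (hx : x ≤ Mp p hp) : Disjoint ((andersonSubmonoid R : Submonoid (Polynomial R)) :
      Set (Polynomial R)) (x.asIdeal : Set (Polynomial R)) := by
  rw [Set.disjoint_left]
  intro f hfA hfx
  have : f ∈ (Mp p hp).asIdeal := hx hfx
  have h0 : constantCoeff f ∈ p := this
  have : f.coeff 0 = 1 := hfA
  rw [show constantCoeff f = f.coeff 0 from rfl, this] at h0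
  exact hp.ne_top (Ideal.eq_top_of_isUnit_mem _ h0 isUnit_one)

/-- From any chain in `Spec R[X]` one gets a chain of the same length whose members are
all disjoint from the Anderson submonoid. -/
lemma exists_disjoint_chain (s : LTSeries (PrimeSpectrum (Polynomial R))) :
    ∃ u : LTSeries (PrimeSpectrum (Polynomial R)), u.length = s.length ∧
      ∀ i, Disjoint ((andersonSubmonoid R : Submonoid (Polynomial R)) : Set (Polynomial R))
        ((u i).asIdeal : Set (Polynomial R)) := by
  set p := s.last.asIdeal.comap (C : R →+* Polynomial R) with hp
  haveI hpp : p.IsPrime := Ideal.IsPrime.comap _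
  rcases Nat.eq_zero_or_eq_succ_pred s.length with h0 | hsucc
  · refine ⟨RelSeries.singleton _ (Mp p hpp), by rw [h0]; rfl, ?_⟩
    intro i
    exact disjoint_Mp p hpp le_rfl
  · obtain ⟨t, htl, hlast⟩ := special_chain (s.length - 1) s hsucc
    refine ⟨t.snoc (Mp p hpp) (by rw [hlast]; exact pX_lt_Mp p hpp), by simp [htl]; omega, ?_⟩
    intro i
    apply disjoint_Mp p hpp
    have : (t.snoc (Mp p hpp) (by rw [hlast]; exact pX_lt_Mp p hpp)) i ≤
        (t.snoc (Mp p hpp) (by rw [hlast]; exact pX_lt_Mp p hpp)).last := by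
      apply LTSeries.monotone
      exact Fin.le_last i
    simpa using this

end Chains


open Order in
/-- If `R` has finite Krull dimension, then the Krull dimension of the Anderson
ring `R[X]_A` equals the Krull dimension of `R[X]`. -/
theorem anderson_ringKrullDim (R : Type*) [CommRing R]
    (h : ringKrullDim R < ⊤) :
    ringKrullDim (AndersonRing R) = ringKrullDim (Polynomial R) := by
  set A := andersonSubmonoid R
  set L := AndersonRing R
  have iso := IsLocalization.orderIsoOfPrime A L
  apply le_antisymm
  · -- dim L ≤ dim R[X]
    apply krullDim_le_of_strictMono
      (fun x : PrimeSpectrum L => (⟨(iso ⟨x.asIdeal, x.isPrime⟩).val,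
        (iso ⟨x.asIdeal, x.isPrime⟩).property.1⟩ : PrimeSpectrum (Polynomial R)))
    intro x y hxy
    rw [← PrimeSpectrum.asIdeal_lt_asIdeal]
    have : (⟨x.asIdeal, x.isPrime⟩ : {p : Ideal L // p.IsPrime}) <
        ⟨y.asIdeal, y.isPrime⟩ := by
      rw [Subtype.mk_lt_mk, PrimeSpectrum.asIdeal_lt_asIdeal]
      exact hxy
    have := iso.strictMono this
    exact this
  · -- dim R[X] ≤ dim L
    show Order.krullDim (PrimeSpectrum (Polynomial R)) ≤ Order.krullDim (PrimeSpectrum L)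
    rw [Order.krullDim]
    apply iSup_le
    intro s
    obtain ⟨u, hul, hud⟩ := exists_disjoint_chain s
    let w : LTSeries (PrimeSpectrum L) :=
      { length := u.length
        toFun := fun i => ⟨(iso.symm ⟨(u i).asIdeal, (u i).isPrime, hud i⟩).1,
          (iso.symm ⟨(u i).asIdeal, (u i).isPrime, hud i⟩).2⟩
        step := fun i => by
          show (_ : PrimeSpectrum L) < _
          rw [← PrimeSpectrum.asIdeal_lt_asIdeal]
          have hu : (⟨(u i.castSucc).asIdeal, (u i.castSucc).isPrime, hud i.castSucc⟩ :
              {p : Ideal (Polynomial R) // p.IsPrime ∧ Disjoint (A : Set (Polynomial R)) ↑p}) <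
              ⟨(u i.succ).asIdeal, (u i.succ).isPrime, hud i.succ⟩ := by
            rw [Subtype.mk_lt_mk, PrimeSpectrum.asIdeal_lt_asIdeal]
            exact u.step i
          exact iso.symm.strictMono hu }
    have hw : w.length = s.length := hul
    calc (s.length : WithBot ℕ∞) = w.length := by rw [hw]
      _ ≤ _ := LTSeries.length_le_krullDim w
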